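/- Let (p_n) and (q_n) be sequences of odd prime numbers with p_n ≠ q_n for all n and p_n/q_n → 1 as n → ∞, and set c_n = −(p_n⁴ + 2p_n³q_n + 2p_n²q_n² − 2p_nq_n³ + q_n⁴)/(2 p_n q_n)². Then for all sufficiently large n, the map f_{c_n}(z) = z² + c_n has exactly 6 rational preperiodic points (namely ±(p_n² + q_n²)/(2p_nq_n) and ±1/2 ± (p_n² + p_nq_n − q_n²)/(2p_nq_n)), of which exactly 2 are periodic and these two form a cycle of exact length 2. -/

import Mathlib

open Filter

/-- The quadratic map `f_c(z) = z² + c`. -/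
def fc (c : ℚ) : ℚ → ℚ := fun z => z ^ 2 + c

/-- `x` is preperiodic for `f_c`: its forward orbit is eventually periodic. -/
def IsPreper (c x : ℚ) : Prop := ∃ m n : ℕ, m < n ∧ (fc c)^[m] x = (fc c)^[n] x

/-- `x` is periodic for `f_c`. -/
def IsPer (c x : ℚ) : Prop := ∃ n : ℕ, 1 ≤ n ∧ (fc c)^[n] x = x

set_option linter.unusedSectionVars false
set_option linter.unusedTactic false
set_option linter.unusedVariables false

def Nz (p q : ℕ) : ℤ := (p:ℤ)^4 + 2*(p:ℤ)^3*(q:ℤ) + 2*(p:ℤ)^2*(q:ℤ)^2 - 2*(p:ℤ)*(q:ℤ)^3 + (q:ℤ)^4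
def Dz (p q : ℕ) : ℤ := (p:ℤ) * (q:ℤ)
def Sz (p q : ℕ) : ℤ := (p:ℤ)^2 + (q:ℤ)^2
def Tz (p q : ℕ) : ℤ := (p:ℤ)^2 - (q:ℤ)^2
def C (p q : ℕ) : ℚ :=
  -(((p:ℚ) ^ 4 + 2 * (p:ℚ) ^ 3 * (q:ℚ) + 2 * (p:ℚ) ^ 2 * (q:ℚ) ^ 2 - 2 * (p:ℚ) * (q:ℚ) ^ 3 + (q:ℚ) ^ 4) /
        (2 * (p:ℚ) * (q:ℚ)) ^ 2)

lemma preper_fc {c x : ℚ} (h : IsPreper c x) : IsPreper c (fc c x) := by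
  obtain ⟨m, n, hmn, he⟩ := h
  exact ⟨m, n, hmn, by
    rw [← Function.iterate_succ_apply, ← Function.iterate_succ_apply,
      Function.iterate_succ_apply', Function.iterate_succ_apply', he]⟩

lemma escape {c x : ℚ} (φ : ℚ → ℚ) (δ : ℚ) (hδ : 0 < δ)
    (h : ∀ y, φ x ≤ φ y → φ y + δ ≤ φ (fc c y)) : ¬ IsPreper c x := by
  rintro ⟨m, n, hmn, he⟩
  have growth : ∀ k : ℕ, φ x + k * δ ≤ φ ((fc c)^[k] x) := by
    intro k
    induction k with
    | zero => simp
    | succ k ih =>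
      have h1 : φ x ≤ φ ((fc c)^[k] x) := by nlinarith [Nat.cast_nonneg (α := ℚ) k]
      have h2 := h _ h1
      rw [show fc c ((fc c)^[k] x) = (fc c)^[k+1] x from (Function.iterate_succ_apply' _ _ _).symm] at h2
      push_cast
      nlinarith
  have cyc : ∀ j : ℕ, (fc c)^[m + j * (n - m)] x = (fc c)^[m] x := by
    intro j
    induction j with
    | zero => simp
    | succ j ih =>
      have : m + (j+1) * (n - m) = (n - m) + (m + j * (n-m)) := by ring
      rw [this, Function.iterate_add_apply, ih, ← Function.iterate_add_apply]
      have : n - m + m = n := by omega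
      rw [this, ← he]
  obtain ⟨j, hj⟩ := exists_nat_gt ((φ ((fc c)^[m] x) - φ x) / δ)
  have h1 := growth (m + j * (n - m))
  rw [cyc j] at h1
  have h2 : (j:ℚ) ≤ ((m + j * (n-m) : ℕ) : ℚ) := by
    have : j ≤ m + j * (n - m) := by
      have : 1 ≤ n - m := by omega
      calc j = j * 1 := by ring
      _ ≤ j * (n-m) := by exact Nat.mul_le_mul_left j this
      _ ≤ m + j * (n-m) := by omega
    exact_mod_cast this
  rw [div_lt_iff₀ hδ] at hj
  nlinarith [mul_le_mul_of_nonneg_right h2 hδ.le]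

lemma arch_escape {c x : ℚ} (hc : |c| ≤ 81/80) (hx : 7/4 < |x|) : ¬ IsPreper c x := by
  apply escape (fun y => |y|) (1/10) (by norm_num)
  intro y hy
  have h1 : |y ^ 2 + c| ≥ |y|^2 - |c| := by
    have := abs_sub_abs_le_abs_sub (y^2) (-c)
    rw [abs_neg, sub_neg_eq_add] at this
    calc |y|^2 - |c| = |y^2| - |c| := by rw [abs_pow]
    _ ≤ |y^2 + c| := by linarith
  have h2 : 7/4 < |y| := lt_of_lt_of_le hx hy
  show |y| + 1/10 ≤ |y ^ 2 + c|
  nlinarith [abs_nonneg y]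

lemma padic_escape {r : ℕ} (hr : r.Prime) {c x : ℚ} (hc : c ≠ 0) {k : ℤ} (hk : k ≤ -1)
    (hvc : 2 * k < padicValRat r c) (hvx : padicValRat r x ≤ k) : ¬ IsPreper c x := by
  haveI : Fact r.Prime := ⟨hr⟩
  apply escape (fun y => -(padicValRat r y : ℚ)) 1 one_pos
  intro y hy
  simp only [neg_le_neg_iff, Int.cast_le] at hy
  have hvy : padicValRat r y ≤ k := le_trans hy hvx
  have hy0 : y ≠ 0 := by
    intro h; rw [h, padicValRat.zero] at hvy; omega
  have hsq : padicValRat r (y ^ 2) = 2 * padicValRat r y := by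
    rw [padicValRat.pow y]; push_cast; ring
  have hlt : padicValRat r (y ^ 2) < padicValRat r c := by
    rw [hsq]; omega
  have hne : y ^ 2 + c ≠ 0 := by
    intro h
    have : c = -(y^2) := by linarith [h]
    rw [this, padicValRat.neg] at hlt
    exact lt_irrefl _ hlt
  have hval : padicValRat r (y ^ 2 + c) = padicValRat r (y ^ 2) :=
    padicValRat.add_eq_of_lt hne (pow_ne_zero 2 hy0) hc hlt
  show -(padicValRat r y : ℚ) + 1 ≤ -(padicValRat r (y^2 + c) : ℚ)
  rw [hval, hsq]
  push_cast
  have : (padicValRat r y : ℚ) ≤ (k : ℚ) := by exact_mod_cast hvy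
  have hk' : (k:ℚ) ≤ -1 := by exact_mod_cast hk
  linarith

lemma int_rep {y : ℚ} (h : ∀ r : ℕ, r.Prime → 0 ≤ padicValRat r y) : ∃ a : ℤ, y = (a : ℚ) := by
  refine ⟨y.num, ?_⟩
  have hden : y.den = 1 := by
    by_contra hd
    set r := y.den.minFac with hr
    have hrp : r.Prime := Nat.minFac_prime hd
    haveI : Fact r.Prime := ⟨hrp⟩
    have hrd : r ∣ y.den := Nat.minFac_dvd _
    have hnum : ¬ (r:ℤ) ∣ y.num := by
      intro hdvd
      have h1 : r ∣ y.num.natAbs := Int.ofNat_dvd_right.mp (Int.dvd_natAbs.mpr hdvd)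
      have h2 : r ∣ Nat.gcd y.num.natAbs y.den := Nat.dvd_gcd h1 hrd
      rw [y.reduced] at h2
      exact hrp.ne_one (Nat.dvd_one.mp h2)
    have hv := h r hrp
    rw [padicValRat_def] at hv
    rw [padicValInt.eq_zero_of_not_dvd hnum] at hv
    have : 1 ≤ padicValNat r y.den := one_le_padicValNat_of_dvd y.pos.ne' hrd
    omega
  exact (Rat.coe_int_num_of_den_eq_one hden).symm

section valc
variable {p q : ℕ} (hp : p.Prime) (hq : q.Prime) (hpodd : Odd p) (hqodd : Odd q) (hne : p ≠ q)

lemma Nz_pos (hp0 : 0 < p) (hq0 : 0 < q) : 0 < Nz p q := by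
  have h1 : Nz p q = 3*((p:ℤ)*q)^2 + ((p:ℤ)^2 + p*q - (q:ℤ)^2)^2 := by unfold Nz; ring
  have hp0' : (0:ℤ) < p := by exact_mod_cast hp0
  have hq0' : (0:ℤ) < q := by exact_mod_cast hq0
  have ha : (1:ℤ) ≤ (p:ℤ)*q := by nlinarith
  nlinarith [sq_nonneg ((p:ℤ)^2 + p*q - (q:ℤ)^2), sq_nonneg ((p:ℤ)*q)]

include hp hq in
lemma C_ne_zero : C p q ≠ 0 := by
  have h1 : 0 < Nz p q := Nz_pos hp.pos hq.pos
  have hP : ((p:ℚ)) ≠ 0 := Nat.cast_ne_zero.mpr hp.pos.ne'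
  have hQ : ((q:ℚ)) ≠ 0 := Nat.cast_ne_zero.mpr hq.pos.ne'
  have hC : C p q = -((Nz p q : ℚ) / ((2*(p:ℚ)*(q:ℚ))^2)) := by
    unfold C Nz; push_cast; ring
  rw [hC]
  have hN : ((Nz p q : ℚ)) ≠ 0 := by exact_mod_cast h1.ne'
  exact neg_ne_zero.mpr (div_ne_zero hN (by positivity))

include hp hq hpodd hne in
lemma val_C_p : padicValRat p (C p q) = -2 := by
  haveI : Fact p.Prime := ⟨hp⟩
  have hP : ((p:ℚ)) ≠ 0 := Nat.cast_ne_zero.mpr hp.pos.ne'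
  have hQ : ((q:ℚ)) ≠ 0 := Nat.cast_ne_zero.mpr hq.pos.ne'
  have hC : C p q = -((Nz p q : ℚ) / ((2*(p:ℚ)*(q:ℚ))^2)) := by
    unfold C Nz; push_cast; ring
  have hNne : ((Nz p q : ℚ)) ≠ 0 := by
    exact_mod_cast (Nz_pos hp.pos hq.pos).ne'
  have hpq : ¬ (p ∣ q) := fun h => hne ((Nat.prime_dvd_prime_iff_eq hp hq).mp h)
  have hp2 : ¬ (p ∣ 2) := by
    intro h
    have h2 := (Nat.prime_dvd_prime_iff_eq hp Nat.prime_two).mp h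
    rcases hpodd with ⟨k, hk⟩
    omega
  have hNdvd : ¬ ((p:ℤ) ∣ Nz p q) := by
    intro h
    have h2 : Nz p q = (q:ℤ)^4 + (p:ℤ) * ((p:ℤ)^3 + 2*(p:ℤ)^2*q + 2*(p:ℤ)*(q:ℤ)^2 - 2*(q:ℤ)^3) := by
      unfold Nz; ring
    obtain ⟨k, hk⟩ := h
    have h3 : (p:ℤ) ∣ (q:ℤ)^4 := by
      refine ⟨k - ((p:ℤ)^3 + 2*(p:ℤ)^2*q + 2*(p:ℤ)*(q:ℤ)^2 - 2*(q:ℤ)^3), ?_⟩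
      have h2' := h2
      rw [hk] at h2'
      linarith [h2']
    have h4 : (p:ℤ) ∣ (q:ℤ) := (Int.Prime.dvd_pow' (by exact_mod_cast hp) h3)
    exact hpq (Int.ofNat_dvd.mp h4)
  have hmul : padicValRat p (2*(p:ℚ)*(q:ℚ)) = 1 := by
    rw [padicValRat.mul (mul_ne_zero two_ne_zero hP) hQ,
        padicValRat.mul two_ne_zero hP]
    have v2 : padicValRat p (2:ℚ) = 0 := by
      rw [show ((2:ℚ)) = ((2:ℕ):ℚ) by norm_num, padicValRat.of_nat,
        padicValNat.eq_zero_of_not_dvd hp2, Nat.cast_zero]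
    have vq : padicValRat p ((q:ℚ)) = 0 := by
      rw [padicValRat.of_nat, padicValNat.eq_zero_of_not_dvd hpq, Nat.cast_zero]
    rw [v2, vq, padicValRat.self hp.one_lt]
    ring
  rw [hC, padicValRat.neg, padicValRat.div hNne (by positivity),
      padicValRat.pow _, hmul]
  rw [show ((Nz p q : ℚ)) = ((Nz p q : ℤ):ℚ) by norm_cast, padicValRat.of_int,
      padicValInt.eq_zero_of_not_dvd hNdvd]
  ring
end valc

section valc2
variable {p q : ℕ} (hp : p.Prime) (hq : q.Prime) (hpodd : Odd p) (hqodd : Odd q) (hne : p ≠ q)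

include hp hq hqodd hne in
lemma val_C_q : padicValRat q (C p q) = -2 := by
  haveI : Fact q.Prime := ⟨hq⟩
  have hP : ((p:ℚ)) ≠ 0 := Nat.cast_ne_zero.mpr hp.pos.ne'
  have hQ : ((q:ℚ)) ≠ 0 := Nat.cast_ne_zero.mpr hq.pos.ne'
  have hC : C p q = -((Nz p q : ℚ) / ((2*(p:ℚ)*(q:ℚ))^2)) := by
    unfold C Nz; push_cast; ring
  have hNne : ((Nz p q : ℚ)) ≠ 0 := by
    exact_mod_cast (Nz_pos hp.pos hq.pos).ne'
  have hqp : ¬ (q ∣ p) := fun h => hne ((Nat.prime_dvd_prime_iff_eq hq hp).mp h).symm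
  have hq2 : ¬ (q ∣ 2) := by
    intro h
    have h2 := (Nat.prime_dvd_prime_iff_eq hq Nat.prime_two).mp h
    rcases hqodd with ⟨k, hk⟩
    omega
  have hNdvd : ¬ ((q:ℤ) ∣ Nz p q) := by
    rintro ⟨k, hk⟩
    have h3 : (q:ℤ) ∣ (p:ℤ)^4 := by
      refine ⟨k - (2*(p:ℤ)^3 + 2*(p:ℤ)^2*q - 2*(p:ℤ)*(q:ℤ)^2 + (q:ℤ)^3), ?_⟩
      have h2' : Nz p q = (p:ℤ)^4 + (q:ℤ) * (2*(p:ℤ)^3 + 2*(p:ℤ)^2*q - 2*(p:ℤ)*(q:ℤ)^2 + (q:ℤ)^3) := by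
        unfold Nz; ring
      rw [hk] at h2'
      linarith [h2']
    have h4 : (q:ℤ) ∣ (p:ℤ) := (Int.Prime.dvd_pow' (by exact_mod_cast hq) h3)
    exact hqp (Int.ofNat_dvd.mp h4)
  have hmul : padicValRat q (2*(p:ℚ)*(q:ℚ)) = 1 := by
    rw [padicValRat.mul (mul_ne_zero two_ne_zero hP) hQ,
        padicValRat.mul two_ne_zero hP]
    have v2 : padicValRat q (2:ℚ) = 0 := by
      rw [show ((2:ℚ)) = ((2:ℕ):ℚ) by norm_num, padicValRat.of_nat,
        padicValNat.eq_zero_of_not_dvd hq2, Nat.cast_zero]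
    have vp : padicValRat q ((p:ℚ)) = 0 := by
      rw [padicValRat.of_nat, padicValNat.eq_zero_of_not_dvd hqp, Nat.cast_zero]
    rw [v2, vp, padicValRat.self hq.one_lt]
    ring
  rw [hC, padicValRat.neg, padicValRat.div hNne (by positivity),
      padicValRat.pow _, hmul]
  rw [show ((Nz p q : ℚ)) = ((Nz p q : ℤ):ℚ) by norm_cast, padicValRat.of_int,
      padicValInt.eq_zero_of_not_dvd hNdvd]
  ring

include hp hq hpodd hqodd in
lemma val_C_other (r : ℕ) (hr : r.Prime) (hrp : r ≠ p) (hrq : r ≠ q) :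
    0 ≤ padicValRat r (C p q) := by
  haveI : Fact r.Prime := ⟨hr⟩
  have hP : ((p:ℚ)) ≠ 0 := Nat.cast_ne_zero.mpr hp.pos.ne'
  have hQ : ((q:ℚ)) ≠ 0 := Nat.cast_ne_zero.mpr hq.pos.ne'
  have hC : C p q = -((Nz p q : ℚ) / ((2*(p:ℚ)*(q:ℚ))^2)) := by
    unfold C Nz; push_cast; ring
  have hNne : ((Nz p q : ℚ)) ≠ 0 := by
    exact_mod_cast (Nz_pos hp.pos hq.pos).ne'
  have hrp' : ¬ (r ∣ p) := fun h => hrp ((Nat.prime_dvd_prime_iff_eq hr hp).mp h)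
  have hrq' : ¬ (r ∣ q) := fun h => hrq ((Nat.prime_dvd_prime_iff_eq hr hq).mp h)
  have vp : padicValRat r ((p:ℚ)) = 0 := by
    rw [padicValRat.of_nat, padicValNat.eq_zero_of_not_dvd hrp', Nat.cast_zero]
  have vq : padicValRat r ((q:ℚ)) = 0 := by
    rw [padicValRat.of_nat, padicValNat.eq_zero_of_not_dvd hrq', Nat.cast_zero]
  have hval : padicValRat r (C p q)
      = (padicValInt r (Nz p q) : ℤ) - 2 * padicValRat r (2:ℚ) := by
    rw [hC, padicValRat.neg, padicValRat.div hNne (by positivity),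
      padicValRat.pow _,
      padicValRat.mul (mul_ne_zero two_ne_zero hP) hQ,
      padicValRat.mul two_ne_zero hP, vp, vq,
      show ((Nz p q : ℚ)) = ((Nz p q : ℤ):ℚ) by norm_cast, padicValRat.of_int]
    ring
  rcases eq_or_ne r 2 with h2 | h2
  · -- r = 2 : need padicValInt 2 N ≥ 2
    subst h2
    have hfour : (4:ℤ) ∣ Nz p q := by
      obtain ⟨a, ha⟩ := hpodd
      obtain ⟨b, hb⟩ := hqodd
      have haz : (p:ℤ) = 2*a + 1 := by exact_mod_cast congrArg (Nat.cast : ℕ → ℤ) ha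
      have hbz : (q:ℤ) = 2*b + 1 := by exact_mod_cast congrArg (Nat.cast : ℕ → ℤ) hb
      refine ⟨(2*(a:ℤ)^2+2*a+2*(b:ℤ)^2+2*b+1)^2 + (p:ℤ)*(q:ℤ)*((a:ℤ)-b)*((p:ℤ)+(q:ℤ)), ?_⟩
      unfold Nz
      rw [haz, hbz]
      ring
    have hv2 : 2 ≤ padicValInt 2 (Nz p q) := by
      have hna : (4:ℕ) ∣ (Nz p q).natAbs := by
        have := Int.natAbs_dvd_natAbs.mpr hfour
        simpa using this
      have hne0 : (Nz p q).natAbs ≠ 0 := by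
        have := (Nz_pos hp.pos hq.pos).ne'
        simpa [Int.natAbs_eq_zero] using this
      have h22 : (2:ℕ)^2 ∣ (Nz p q).natAbs := by norm_num at hna ⊢; exact hna
      have := (Nat.Prime.pow_dvd_iff_le_factorization Nat.prime_two hne0).mp h22
      rwa [Nat.factorization_def _ Nat.prime_two] at this
    have hv2' : padicValRat 2 (2:ℚ) = 1 := by
      rw [show ((2:ℚ)) = ((2:ℕ):ℚ) by norm_num, padicValRat.of_nat, padicValNat_self, Nat.cast_one]
    rw [hval, hv2']
    omega
  · have hr2 : ¬ (r ∣ 2) := by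
      intro h
      exact h2 ((Nat.prime_dvd_prime_iff_eq hr Nat.prime_two).mp h)
    have hv2' : padicValRat r (2:ℚ) = 0 := by
      rw [show ((2:ℚ)) = ((2:ℕ):ℚ) by norm_num, padicValRat.of_nat,
        padicValNat.eq_zero_of_not_dvd hr2, Nat.cast_zero]
    rw [hval, hv2']
    omega
end valc2

lemma numf {p q : ℕ} (hp : p.Prime) (hq : q.Prime) (hpodd : Odd p) (hqodd : Odd q) (hne : p ≠ q)
    (hclose : 300 * ((p:ℤ) - (q:ℤ)).natAbs < q) :
    0 < Dz p q ∧ 2*Dz p q ≤ Sz p q ∧ 100*Sz p q ≤ 201*Dz p q ∧ 50*Tz p q ≤ Dz p q ∧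
      -(Dz p q) ≤ 50*Tz p q ∧ 80 * Nz p q ≤ 324 * (Dz p q)^2 ∧ Even (Sz p q) ∧ Even (Tz p q) ∧
      Odd (Dz p q) ∧ 599 ≤ (p:ℤ) ∧ 601 ≤ (q:ℤ) := by
  have hde : Even ((p:ℤ) - q) := (Int.odd_coe_nat p).mpr hpodd |>.sub_odd ((Int.odd_coe_nat q).mpr hqodd)
  have hdne : ((p:ℤ) - q) ≠ 0 := by
    intro h
    exact hne (by exact_mod_cast sub_eq_zero.mp h)
  have hna2 : 2 ≤ ((p:ℤ) - q).natAbs := by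
    have h1 : ((p:ℤ) - q).natAbs ≠ 0 := Int.natAbs_ne_zero.mpr hdne
    have h2 : Even (((p:ℤ) - q).natAbs) := Int.natAbs_even.mpr hde
    obtain ⟨k, hk⟩ := h2
    omega
  have hq600 : 600 < q := by omega
  have hc' : (300:ℤ) * ((((p:ℤ)-q).natAbs : ℕ) : ℤ) < (q:ℤ) := by exact_mod_cast hclose
  have habs : |300 * ((p:ℤ) - q)| < q := by
    rw [abs_mul, abs_of_pos (show (0:ℤ) < 300 by norm_num), Int.abs_eq_natAbs]
    exact hc'
  obtain ⟨h1, h2⟩ := abs_lt.mp habs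
  have hQ : (601:ℤ) ≤ (q:ℤ) := by exact_mod_cast hq600
  have hP : (599:ℤ) ≤ (p:ℤ) := by nlinarith
  set P := (p:ℤ) with hPdef
  set Q := (q:ℤ) with hQdef
  have t1 : 0 < Dz p q := by unfold Dz; nlinarith
  have t2 : 2*Dz p q ≤ Sz p q := by unfold Dz Sz; nlinarith [sq_nonneg (P - Q)]
  have hsq : (300*(P - Q))^2 < Q^2 := sq_lt_sq' (by linarith) (by linarith)
  have hQ2 : 299*(Q*Q) < 300*(P*Q) := by nlinarith
  have t3 : 100*Sz p q ≤ 201*Dz p q := by unfold Sz Dz; nlinarith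
  have t4 : 50*Tz p q ≤ Dz p q := by
    unfold Tz Dz
    nlinarith [mul_lt_mul_of_pos_right h2 (show (0:ℤ) < P + Q by linarith)]
  have t5 : -(Dz p q) ≤ 50*Tz p q := by
    unfold Tz Dz
    nlinarith [mul_lt_mul_of_pos_right h1 (show (0:ℤ) < P + Q by linarith)]
  have hNid : Nz p q = 3*(Dz p q)^2 + (Dz p q + Tz p q)^2 := by unfold Nz Dz Tz; ring
  have hsq2 : (50*(Dz p q + Tz p q))^2 ≤ (51*Dz p q)^2 :=
    sq_le_sq' (by linarith) (by linarith)
  have t6 : 80 * Nz p q ≤ 324 * (Dz p q)^2 := by rw [hNid]; nlinarith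
  have t7 : Even (Sz p q) := by
    obtain ⟨a, ha⟩ := hpodd; obtain ⟨b, hb⟩ := hqodd
    have haz : P = 2*a + 1 := by rw [hPdef]; exact_mod_cast congrArg (Nat.cast : ℕ → ℤ) ha
    have hbz : Q = 2*b + 1 := by rw [hQdef]; exact_mod_cast congrArg (Nat.cast : ℕ → ℤ) hb
    exact ⟨2*(a:ℤ)^2+2*a+2*(b:ℤ)^2+2*b+1, by unfold Sz; rw [← hPdef, ← hQdef, haz, hbz]; ring⟩
  have t8 : Even (Tz p q) := by
    obtain ⟨a, ha⟩ := hpodd; obtain ⟨b, hb⟩ := hqodd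
    have haz : P = 2*a + 1 := by rw [hPdef]; exact_mod_cast congrArg (Nat.cast : ℕ → ℤ) ha
    have hbz : Q = 2*b + 1 := by rw [hQdef]; exact_mod_cast congrArg (Nat.cast : ℕ → ℤ) hb
    exact ⟨2*(a:ℤ)^2+2*a-2*(b:ℤ)^2-2*b, by unfold Tz; rw [← hPdef, ← hQdef, haz, hbz]; ring⟩
  have t9 : Odd (Dz p q) := by
    obtain ⟨a, ha⟩ := hpodd; obtain ⟨b, hb⟩ := hqodd
    have haz : P = 2*a + 1 := by rw [hPdef]; exact_mod_cast congrArg (Nat.cast : ℕ → ℤ) ha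
    have hbz : Q = 2*b + 1 := by rw [hQdef]; exact_mod_cast congrArg (Nat.cast : ℕ → ℤ) hb
    exact ⟨2*(a:ℤ)*b + a + b, by unfold Dz; rw [← hPdef, ← hQdef, haz, hbz]; ring⟩
  exact ⟨t1, t2, t3, t4, t5, t6, t7, t8, t9, hP, hQ⟩

section reps
variable {p q : ℕ} (hp : p.Prime) (hq : q.Prime) (hpodd : Odd p) (hqodd : Odd q) (hne : p ≠ q)

include hp hq hpodd hqodd hne in
lemma rep {x : ℚ} (hx : IsPreper (C p q) x) : ∃ a : ℤ, x = (a:ℚ)/((p:ℚ)*(q:ℚ)) := by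
  have hP : ((p:ℚ)) ≠ 0 := Nat.cast_ne_zero.mpr hp.pos.ne'
  have hQ : ((q:ℚ)) ≠ 0 := Nat.cast_ne_zero.mpr hq.pos.ne'
  have hPQne : ((p:ℚ)*(q:ℚ)) ≠ 0 := mul_ne_zero hP hQ
  rcases eq_or_ne x 0 with rfl | h0
  · exact ⟨0, by simp⟩
  have hcne : C p q ≠ 0 := C_ne_zero hp hq
  have key : ∀ r : ℕ, r.Prime → 0 ≤ padicValRat r (x * ((p:ℚ)*(q:ℚ))) := by
    intro r hr
    haveI : Fact r.Prime := ⟨hr⟩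
    rw [padicValRat.mul h0 hPQne, padicValRat.mul hP hQ]
    by_cases hrp : r = p
    · subst hrp
      have hvx : -1 ≤ padicValRat r x := by
        by_contra hlt
        push_neg at hlt
        exact (padic_escape hr hcne (k := -2) (by norm_num)
          (by rw [val_C_p hp hq hpodd hne]; norm_num) (by omega)) hx
      have v1 : padicValRat r ((r:ℚ)) = 1 := padicValRat.self hr.one_lt
      have hrq' : ¬ (r ∣ q) := fun h => hne ((Nat.prime_dvd_prime_iff_eq hr hq).mp h)
      have v0 : padicValRat r ((q:ℚ)) = 0 := by
        rw [padicValRat.of_nat, padicValNat.eq_zero_of_not_dvd hrq', Nat.cast_zero]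
      rw [v1, v0]
      omega
    · by_cases hrq : r = q
      · subst hrq
        have hvx : -1 ≤ padicValRat r x := by
          by_contra hlt
          push_neg at hlt
          exact (padic_escape hr hcne (k := -2) (by norm_num)
            (by rw [val_C_q hp hq hqodd hne]; norm_num) (by omega)) hx
        have v1 : padicValRat r ((r:ℚ)) = 1 := padicValRat.self hr.one_lt
        have hrp' : ¬ (r ∣ p) := fun h => hrp ((Nat.prime_dvd_prime_iff_eq hr hp).mp h)
        have v0 : padicValRat r ((p:ℚ)) = 0 := by
          rw [padicValRat.of_nat, padicValNat.eq_zero_of_not_dvd hrp', Nat.cast_zero]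
        rw [v1, v0]
        omega
      · have hvx : 0 ≤ padicValRat r x := by
          by_contra hlt
          push_neg at hlt
          exact (padic_escape hr hcne (k := -1) le_rfl
            (by have := val_C_other hp hq hpodd hqodd r hr hrp hrq; omega) (by omega)) hx
        have hrp' : ¬ (r ∣ p) := fun h => hrp ((Nat.prime_dvd_prime_iff_eq hr hp).mp h)
        have hrq' : ¬ (r ∣ q) := fun h => hrq ((Nat.prime_dvd_prime_iff_eq hr hq).mp h)
        have v0p : padicValRat r ((p:ℚ)) = 0 := by
          rw [padicValRat.of_nat, padicValNat.eq_zero_of_not_dvd hrp', Nat.cast_zero]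
        have v0q : padicValRat r ((q:ℚ)) = 0 := by
          rw [padicValRat.of_nat, padicValNat.eq_zero_of_not_dvd hrq', Nat.cast_zero]
        rw [v0p, v0q]
        omega
  obtain ⟨a, ha⟩ := int_rep key
  exact ⟨a, by rw [eq_div_iff hPQne]; exact ha⟩

include hp hq hpodd hqodd hne in
lemma Cabs (hclose : 300 * ((p:ℤ) - (q:ℤ)).natAbs < q) : |C p q| ≤ 81/80 := by
  have hP : ((p:ℚ)) ≠ 0 := Nat.cast_ne_zero.mpr hp.pos.ne'
  have hQ : ((q:ℚ)) ≠ 0 := Nat.cast_ne_zero.mpr hq.pos.ne'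
  have t6 : 80 * Nz p q ≤ 324 * (Dz p q)^2 := (numf hp hq hpodd hqodd hne hclose).2.2.2.2.2.1
  have hC : C p q = -((Nz p q : ℚ)/((2*(p:ℚ)*(q:ℚ))^2)) := by
    unfold C Nz; push_cast; ring
  have hN0 : (0:ℚ) ≤ ((Nz p q : ℤ):ℚ) := by exact_mod_cast (Nz_pos hp.pos hq.pos).le
  have hden : (0:ℚ) < ((2*(p:ℚ)*(q:ℚ))^2) := by
    have : (2*(p:ℚ)*(q:ℚ)) ≠ 0 := by positivity
    positivity
  rw [hC, abs_neg, abs_div, abs_of_nonneg hN0, abs_of_pos hden, div_le_iff₀ hden]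
  have hden2 : ((2*(p:ℚ)*(q:ℚ))^2) = 4*((Dz p q : ℤ):ℚ)^2 := by
    unfold Dz; push_cast; ring
  rw [hden2]
  have t6' : 80 * ((Nz p q : ℤ):ℚ) ≤ 324 * ((Dz p q : ℤ):ℚ)^2 := by exact_mod_cast t6
  linarith

include hp hq hpodd hqodd hne in
lemma bound7 (hclose : 300 * ((p:ℤ) - (q:ℤ)).natAbs < q)
    {x : ℚ} (hx : IsPreper (C p q) x) : |x| ≤ 7/4 := by
  by_contra h
  push_neg at h
  exact arch_escape (Cabs hp hq hpodd hqodd hne hclose) h hx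
end reps

section core
variable {p q : ℕ} (hp : p.Prime) (hq : q.Prime) (hpodd : Odd p) (hqodd : Odd q) (hne : p ≠ q)

include hp hq in
lemma stepEq {x : ℚ} {a b : ℤ}
    (hxa : x = (a:ℚ)/((p:ℚ)*(q:ℚ))) (hfb : fc (C p q) x = (b:ℚ)/((p:ℚ)*(q:ℚ))) :
    4*a^2 - Nz p q = 4 * Dz p q * b := by
  have hP : ((p:ℚ)) ≠ 0 := Nat.cast_ne_zero.mpr hp.pos.ne'
  have hQ : ((q:ℚ)) ≠ 0 := Nat.cast_ne_zero.mpr hq.pos.ne'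
  have key : (fc (C p q) x) * (4*((p:ℚ)*(q:ℚ))^2) = ((4*a^2 - Nz p q : ℤ):ℚ) := by
    unfold fc C
    rw [hxa]
    unfold Nz
    push_cast
    field_simp
    ring
  have key2 : (fc (C p q) x) * (4*((p:ℚ)*(q:ℚ))^2) = ((4 * Dz p q * b : ℤ):ℚ) := by
    rw [hfb]
    unfold Dz
    push_cast
    field_simp
  exact_mod_cast key.symm.trans key2

-- generic kill
include hp hq hpodd hqodd hne in
lemma killcore {x : ℚ} (hx : IsPreper (C p q) x) {u w V : ℤ} {r g : ℕ}
    (hxu : x = (u:ℚ)/(2*(p:ℚ)*(q:ℚ)))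
    (hw : u^2 - Nz p q = 2 * Dz p q * w)
    (hrpq : r = p ∨ r = q) (hgpq : g = p ∨ g = q) (hgr : g ≠ r)
    (hV : w^2 - Nz p q = (r:ℤ) * V + 8 * (g:ℤ)^4) : False := by
  have hP : ((p:ℚ)) ≠ 0 := Nat.cast_ne_zero.mpr hp.pos.ne'
  have hQ : ((q:ℚ)) ≠ 0 := Nat.cast_ne_zero.mpr hq.pos.ne'
  obtain ⟨b, hfb⟩ := rep hp hq hpodd hqodd hne (preper_fc hx)
  obtain ⟨b', hfb'⟩ := rep hp hq hpodd hqodd hne (preper_fc (preper_fc hx))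
  -- fc x = w/(2pq)
  have hfx : fc (C p q) x = (w:ℚ)/(2*(p:ℚ)*(q:ℚ)) := by
    unfold fc C
    rw [hxu]
    have hcast : ((u:ℚ))^2 = ((Nz p q : ℚ) + 2 * ((Dz p q : ℚ)) * ((w:ℚ))) := by
      have : ((u^2 : ℤ) : ℚ) = (((Nz p q + 2 * Dz p q * w) : ℤ) : ℚ) := by
        exact_mod_cast congrArg (fun t : ℤ => (t:ℚ)) (by linarith [hw] : u^2 = Nz p q + 2 * Dz p q * w)
      push_cast at this
      push_cast
      linarith [this]
    have hNc : ((Nz p q : ℚ)) = (p:ℚ)^4 + 2*(p:ℚ)^3*(q:ℚ) + 2*(p:ℚ)^2*(q:ℚ)^2 - 2*(p:ℚ)*(q:ℚ)^3 + (q:ℚ)^4 := by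
      unfold Nz; push_cast; ring
    have hDc : ((Dz p q : ℚ)) = (p:ℚ)*(q:ℚ) := by unfold Dz; push_cast; ring
    rw [div_pow, hcast, hNc, hDc]
    field_simp
    ring
  -- w = 2b
  have hw2b : w = 2*b := by
    rw [hfb] at hfx
    have h' : (w:ℚ) * ((p:ℚ)*(q:ℚ)) = (2*(b:ℚ)) * ((p:ℚ)*(q:ℚ)) := by
      field_simp at hfx
      linear_combination (-((p:ℚ)*(q:ℚ))) * hfx
    have := mul_right_cancel₀ (mul_ne_zero hP hQ) h'
    exact_mod_cast this
  have hstep2 : 4*b^2 - Nz p q = 4 * Dz p q * b' := stepEq hp hq hfb hfb'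
  have hw2 : w^2 - Nz p q = 4 * Dz p q * b' := by
    rw [hw2b]; linarith [hstep2]
  -- r divides 8 g^4
  have hrz : Prime ((r:ℕ):ℤ) := by
    rcases hrpq with h | h <;> subst h
    · exact_mod_cast Nat.prime_iff_prime_int.mp hp
    · exact_mod_cast Nat.prime_iff_prime_int.mp hq
  have hrD : (r:ℤ) ∣ 4 * Dz p q * b' := by
    rcases hrpq with h | h <;> subst h
    · exact ⟨4*(q:ℤ)*b', by unfold Dz; ring⟩
    · exact ⟨4*(p:ℤ)*b', by unfold Dz; ring⟩
  have hr8 : (r:ℤ) ∣ 8 * (g:ℤ)^4 := by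
    have : (8:ℤ) * (g:ℤ)^4 = (4 * Dz p q * b') - (r:ℤ) * V := by linarith [hV, hw2]
    rw [this]
    exact dvd_sub hrD ⟨V, rfl⟩
  -- contradiction
  rcases hrz.dvd_mul.mp hr8 with h8 | hg4
  · have : (r:ℤ) ∣ (2:ℤ)^3 := by
      have : ((8:ℤ)) = 2^3 := by norm_num
      rwa [this] at h8
    have h2 : (r:ℤ) ∣ 2 := hrz.dvd_of_dvd_pow this
    have : (r:ℕ) ∣ 2 := by exact_mod_cast h2
    have hrP : (r:ℕ).Prime := by rcases hrpq with h | h <;> subst h <;> assumption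
    have hrodd : Odd r := by rcases hrpq with h | h <;> subst h <;> assumption
    have := (Nat.prime_dvd_prime_iff_eq hrP Nat.prime_two).mp this
    rcases hrodd with ⟨k, hk⟩; omega
  · have hg : (r:ℤ) ∣ (g:ℤ) := hrz.dvd_of_dvd_pow hg4
    have hgn : (r:ℕ) ∣ g := by exact_mod_cast hg
    have hrP : (r:ℕ).Prime := by rcases hrpq with h | h <;> subst h <;> assumption
    have hgP : (g:ℕ).Prime := by rcases hgpq with h | h <;> subst h <;> assumption
    exact hgr ((Nat.prime_dvd_prime_iff_eq hrP hgP).mp hgn).symm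
end core

section kills
variable {p q : ℕ} (hp : p.Prime) (hq : q.Prime) (hpodd : Odd p) (hqodd : Odd q) (hne : p ≠ q)

include hp hq hpodd hqodd hne in
lemma kill_S2 {x : ℚ} (hx : IsPreper (C p q) x) {u : ℤ}
    (hxu : x = (u:ℚ)/(2*(p:ℚ)*(q:ℚ))) (hu : u^2 = (Sz p q - 2*Dz p q)^2) : False := by
  refine killcore hp hq hpodd hqodd hne hx (w := 2*Dz p q - 2*Sz p q - Tz p q)
    (V := -2*(p:ℤ)*(7*(p:ℤ)^2 - 4*(p:ℤ)*q + (q:ℤ)^2)) (r := q) (g := p) hxu ?_ (Or.inr rfl) (Or.inl rfl) hne ?_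
  · rw [hu]; unfold Sz Dz Tz Nz; ring
  · unfold Sz Dz Tz Nz; push_cast; ring
end kills
section classif
variable {p q : ℕ} (hp : p.Prime) (hq : q.Prime) (hpodd : Odd p) (hqodd : Odd q) (hne : p ≠ q)

include hp hq hpodd hqodd hne in
lemma kill_S4 {x : ℚ} (hx : IsPreper (C p q) x) {u : ℤ}
    (hxu : x = (u:ℚ)/(2*(p:ℚ)*(q:ℚ))) (hu : u^2 = (Sz p q - 4*Dz p q)^2) : False := by
  refine killcore hp hq hpodd hqodd hne hx (w := 8*Dz p q - 4*Sz p q - Tz p q)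
    (V := 2*(12*(p:ℤ)^3 - 41*(p:ℤ)^2*q + 46*(p:ℤ)*(q:ℤ)^2 - 23*(q:ℤ)^3)) (r := p) (g := q) hxu ?_
    (Or.inl rfl) (Or.inr rfl) (Ne.symm hne) ?_
  · rw [hu]; simp only [Sz, Dz, Tz, Nz]; ring
  · simp only [Sz, Dz, Tz, Nz]; ring

include hp hq hpodd hqodd hne in
lemma kill_T2 {x : ℚ} (hx : IsPreper (C p q) x) {u : ℤ}
    (hxu : x = (u:ℚ)/(2*(p:ℚ)*(q:ℚ))) (hu : u^2 = (Tz p q - 2*Dz p q)^2) : False := by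
  refine killcore hp hq hpodd hqodd hne hx (w := -3*Tz p q)
    (V := 2*(4*(p:ℤ)^3 - (p:ℤ)^2*q - 10*(p:ℤ)*(q:ℤ)^2 + (q:ℤ)^3)) (r := p) (g := q) hxu ?_
    (Or.inl rfl) (Or.inr rfl) (Ne.symm hne) ?_
  · rw [hu]; simp only [Sz, Dz, Tz, Nz]; ring
  · simp only [Sz, Dz, Tz, Nz]; ring

include hp hq hpodd hqodd hne in
lemma classify (hclose : 300 * ((p:ℤ) - (q:ℤ)).natAbs < q)
    {x : ℚ} (hx : IsPreper (C p q) x) :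
    ∃ u : ℤ, x = (u:ℚ)/(2*(p:ℚ)*(q:ℚ)) ∧
      (u = Sz p q ∨ u = -Sz p q ∨ u = Tz p q ∨ u = -Tz p q ∨
        u = Tz p q + 2*Dz p q ∨ u = -(Tz p q + 2*Dz p q)) := by
  obtain ⟨hD, hS2, hS201, hT50a, hT50b, hN80, hSev, hTev, hDodd, hp599, hq601⟩ :=
    numf hp hq hpodd hqodd hne hclose
  have hP : ((p:ℚ)) ≠ 0 := Nat.cast_ne_zero.mpr hp.pos.ne'
  have hQ : ((q:ℚ)) ≠ 0 := Nat.cast_ne_zero.mpr hq.pos.ne'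
  obtain ⟨a, hxa⟩ := rep hp hq hpodd hqodd hne hx
  obtain ⟨b, hfb⟩ := rep hp hq hpodd hqodd hne (preper_fc hx)
  have hstep : 4*a^2 - Nz p q = 4 * Dz p q * b := stepEq hp hq hxa hfb
  -- x in terms of u = 2a
  have hxu : x = ((2*a : ℤ):ℚ)/(2*(p:ℚ)*(q:ℚ)) := by
    rw [hxa]; push_cast; field_simp
  -- the bound |4a| ≤ 7D
  have habs : |4*a| ≤ 7 * Dz p q := by
    have h1 : |x| ≤ 7/4 := bound7 hp hq hpodd hqodd hne hclose hx
    rw [hxa] at h1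
    have hDq : (0:ℚ) < ((Dz p q : ℤ):ℚ) := by exact_mod_cast hD
    have hpq' : ((p:ℚ)*(q:ℚ)) = ((Dz p q : ℤ):ℚ) := by unfold Dz; push_cast; ring
    rw [hpq', abs_div, abs_of_pos hDq, div_le_iff₀ hDq] at h1
    have h2 : |((4*a:ℤ):ℚ)| ≤ ((7 * Dz p q : ℤ):ℚ) := by
      rw [show ((4*a:ℤ):ℚ) = 4*((a:ℤ):ℚ) by push_cast; ring, abs_mul]
      rw [show |(4:ℚ)| = 4 by norm_num]
      push_cast
      nlinarith [h1]
    exact_mod_cast h2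
  -- congruences
  have hpz : Prime ((p:ℕ):ℤ) := by exact_mod_cast Nat.prime_iff_prime_int.mp hp
  have hqz : Prime ((q:ℕ):ℤ) := by exact_mod_cast Nat.prime_iff_prime_int.mp hq
  have hpc : (p:ℤ) ∣ (2*a - (q:ℤ)^2) ∨ (p:ℤ) ∣ (2*a + (q:ℤ)^2) := by
    refine hpz.dvd_mul.mp ⟨4*(q:ℤ)*b + ((p:ℤ)^3 + 2*(p:ℤ)^2*q + 2*(p:ℤ)*(q:ℤ)^2 - 2*(q:ℤ)^3), ?_⟩
    have : 4*a^2 - Nz p q = 4 * Dz p q * b := hstep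
    unfold Nz Dz at this
    linear_combination this
  have hqc : (q:ℤ) ∣ (2*a - (p:ℤ)^2) ∨ (q:ℤ) ∣ (2*a + (p:ℤ)^2) := by
    refine hqz.dvd_mul.mp ⟨4*(p:ℤ)*b + (2*(p:ℤ)^3 + 2*(p:ℤ)^2*q - 2*(p:ℤ)*(q:ℤ)^2 + (q:ℤ)^3), ?_⟩
    have : 4*a^2 - Nz p q = 4 * Dz p q * b := hstep
    unfold Nz Dz at this
    linear_combination this
  -- get w with D ∣ 2a - w
  have hcop : IsCoprime ((p:ℕ):ℤ) ((q:ℕ):ℤ) :=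
    Int.isCoprime_iff_gcd_eq_one.mpr (by exact_mod_cast (Nat.coprime_primes hp hq).mpr hne)
  have hkey : ∃ w : ℤ, (w = Sz p q ∨ w = -Sz p q ∨ w = Tz p q ∨ w = -Tz p q) ∧
      Dz p q ∣ 2*a - w := by
    rcases hpc with hp1 | hp1 <;> rcases hqc with hq1 | hq1
    · -- 2a ≡ q² (p), ≡ p² (q) : w = S
      refine ⟨Sz p q, Or.inl rfl, hcop.mul_dvd ?_ ?_⟩
      · obtain ⟨k, hk⟩ := hp1
        exact ⟨k - (p:ℤ), by unfold Sz; linear_combination hk⟩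
      · obtain ⟨k, hk⟩ := hq1
        exact ⟨k - (q:ℤ), by unfold Sz; linear_combination hk⟩
    · -- 2a ≡ q² (p), ≡ -p² (q) : w = -T
      refine ⟨-Tz p q, Or.inr (Or.inr (Or.inr rfl)), hcop.mul_dvd ?_ ?_⟩
      · obtain ⟨k, hk⟩ := hp1
        exact ⟨k + (p:ℤ), by unfold Tz; linear_combination hk⟩
      · obtain ⟨k, hk⟩ := hq1
        exact ⟨k - (q:ℤ), by unfold Tz; linear_combination hk⟩
    · -- 2a ≡ -q² (p), ≡ p² (q) : w = T
      refine ⟨Tz p q, Or.inr (Or.inr (Or.inl rfl)), hcop.mul_dvd ?_ ?_⟩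
      · obtain ⟨k, hk⟩ := hp1
        exact ⟨k - (p:ℤ), by unfold Tz; linear_combination hk⟩
      · obtain ⟨k, hk⟩ := hq1
        exact ⟨k + (q:ℤ), by unfold Tz; linear_combination hk⟩
    · -- w = -S
      refine ⟨-Sz p q, Or.inr (Or.inl rfl), hcop.mul_dvd ?_ ?_⟩
      · obtain ⟨k, hk⟩ := hp1
        exact ⟨k + (p:ℤ), by unfold Sz; linear_combination hk⟩
      · obtain ⟨k, hk⟩ := hq1
        exact ⟨k + (q:ℤ), by unfold Sz; linear_combination hk⟩
  obtain ⟨w, hwcase, j, hj⟩ := hkey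
  have hwev : Even w := by
    rcases hwcase with rfl | rfl | rfl | rfl
    · exact hSev
    · exact hSev.neg
    · exact hTev
    · exact hTev.neg
  have hjev : Even j := by
    have h1 : Even (Dz p q * j) := by
      rw [← hj]
      exact (Even.sub ⟨a, two_mul a⟩ hwev)
    rcases Int.even_mul.mp h1 with h | h
    · exact absurd h (by rwa [Int.not_even_iff_odd])
    · exact h
  obtain ⟨i, hi⟩ := hjev
  have hd4 : 4*a = 2*w + 4*(Dz p q)*i := by rw [hi] at hj; linarith
  obtain ⟨hub, hlb⟩ := abs_le.mp habs
  have hgood : ∀ v : ℤ, 2*a = v →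
      (v = Sz p q ∨ v = -Sz p q ∨ v = Tz p q ∨ v = -Tz p q ∨
        v = Tz p q + 2*Dz p q ∨ v = -(Tz p q + 2*Dz p q)) →
      (∃ u : ℤ, x = (u:ℚ)/(2*(p:ℚ)*(q:ℚ)) ∧
      (u = Sz p q ∨ u = -Sz p q ∨ u = Tz p q ∨ u = -Tz p q ∨
        u = Tz p q + 2*Dz p q ∨ u = -(Tz p q + 2*Dz p q))) := by
    intro v hv hvcase
    exact ⟨2*a, hxu, hv ▸ hvcase⟩
  rcases hwcase with rfl | rfl | rfl | rfl
  · -- w = S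
    have h1 : 4*i ≤ 3 :=
      le_of_mul_le_mul_left (show Dz p q * (4*i) ≤ Dz p q * 3 by linarith) hD
    have h2 : -1102 ≤ 400*i :=
      le_of_mul_le_mul_left (show Dz p q * (-1102) ≤ Dz p q * (400*i) by linarith) hD
    have : i = 0 ∨ i = -1 ∨ i = -2 := by omega
    rcases this with rfl | rfl | rfl
    · exact hgood _ (by linarith) (Or.inl rfl)
    · exact (kill_S2 hp hq hpodd hqodd hne hx hxu
        (by have : 2*a = Sz p q - 2*Dz p q := by linarith
            rw [this])).elim
    · exact (kill_S4 hp hq hpodd hqodd hne hx hxu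
        (by have : 2*a = Sz p q - 4*Dz p q := by linarith
            rw [this])).elim
  · -- w = -S
    have h1 : 400*i ≤ 1102 :=
      le_of_mul_le_mul_left (show Dz p q * (400*i) ≤ Dz p q * 1102 by linarith) hD
    have h2 : -3 ≤ 4*i :=
      le_of_mul_le_mul_left (show Dz p q * (-3) ≤ Dz p q * (4*i) by linarith) hD
    have : i = 0 ∨ i = 1 ∨ i = 2 := by omega
    rcases this with rfl | rfl | rfl
    · exact hgood _ (by linarith) (Or.inr (Or.inl rfl))
    · exact (kill_S2 hp hq hpodd hqodd hne hx hxu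
        (by have : 2*a = -(Sz p q - 2*Dz p q) := by linarith
            rw [this]
            ring)).elim
    · exact (kill_S4 hp hq hpodd hqodd hne hx hxu
        (by have : 2*a = -(Sz p q - 4*Dz p q) := by linarith
            rw [this]
            ring)).elim
  · -- w = T
    have h1 : 400*i ≤ 704 :=
      le_of_mul_le_mul_left (show Dz p q * (400*i) ≤ Dz p q * 704 by linarith) hD
    have h2 : -704 ≤ 400*i :=
      le_of_mul_le_mul_left (show Dz p q * (-704) ≤ Dz p q * (400*i) by linarith) hD
    have : i = -1 ∨ i = 0 ∨ i = 1 := by omega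
    rcases this with rfl | rfl | rfl
    · exact (kill_T2 hp hq hpodd hqodd hne hx hxu
        (by have : 2*a = Tz p q - 2*Dz p q := by linarith
            rw [this])).elim
    · exact hgood _ (by linarith) (Or.inr (Or.inr (Or.inl rfl)))
    · exact hgood _ (by linarith) (Or.inr (Or.inr (Or.inr (Or.inr (Or.inl rfl)))))
  · -- w = -T
    have h1 : 400*i ≤ 704 :=
      le_of_mul_le_mul_left (show Dz p q * (400*i) ≤ Dz p q * 704 by linarith) hD
    have h2 : -704 ≤ 400*i :=
      le_of_mul_le_mul_left (show Dz p q * (-704) ≤ Dz p q * (400*i) by linarith) hD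
    have : i = -1 ∨ i = 0 ∨ i = 1 := by omega
    rcases this with rfl | rfl | rfl
    · exact hgood _ (by linarith) (Or.inr (Or.inr (Or.inr (Or.inr (Or.inr rfl)))))
    · exact hgood _ (by linarith) (Or.inr (Or.inr (Or.inr (Or.inl rfl))))
    · exact (kill_T2 hp hq hpodd hqodd hne hx hxu
        (by have : 2*a = -(Tz p q - 2*Dz p q) := by linarith
            rw [this]
            ring)).elim
end classif

section fin
variable {p q : ℕ} (hp : p.Prime) (hq : q.Prime) (hpodd : Odd p) (hqodd : Odd q) (hne : p ≠ q)

include hp hq in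
lemma fval {u w : ℤ} (hw : u^2 - Nz p q = 2 * Dz p q * w) :
    fc (C p q) ((u:ℚ)/(2*(p:ℚ)*(q:ℚ))) = (w:ℚ)/(2*(p:ℚ)*(q:ℚ)) := by
  have hP : ((p:ℚ)) ≠ 0 := Nat.cast_ne_zero.mpr hp.pos.ne'
  have hQ : ((q:ℚ)) ≠ 0 := Nat.cast_ne_zero.mpr hq.pos.ne'
  unfold fc C
  have hcast : ((u:ℚ))^2 = ((Nz p q : ℚ) + 2 * ((Dz p q : ℚ)) * ((w:ℚ))) := by
    have : ((u^2 : ℤ) : ℚ) = (((Nz p q + 2 * Dz p q * w) : ℤ) : ℚ) := by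
      exact_mod_cast congrArg (fun t : ℤ => (t:ℚ)) (by linarith [hw] : u^2 = Nz p q + 2 * Dz p q * w)
    push_cast at this
    linarith [this]
  have hNc : ((Nz p q : ℚ)) = (p:ℚ)^4 + 2*(p:ℚ)^3*(q:ℚ) + 2*(p:ℚ)^2*(q:ℚ)^2 - 2*(p:ℚ)*(q:ℚ)^3 + (q:ℚ)^4 := by
    unfold Nz; push_cast; ring
  have hDc : ((Dz p q : ℚ)) = (p:ℚ)*(q:ℚ) := by unfold Dz; push_cast; ring
  rw [div_pow, hcast, hNc, hDc]
  field_simp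
  ring
end fin

section key
variable {p q : ℕ} (hp : p.Prime) (hq : q.Prime) (hpodd : Odd p) (hqodd : Odd q) (hne : p ≠ q)


include hp hq hpodd hqodd hne in
set_option maxHeartbeats 2000000 in
theorem key (hclose : 300 * ((p:ℤ) - (q:ℤ)).natAbs < q) :
    {x : ℚ | IsPreper (C p q) x} =
        {((p:ℚ) ^ 2 + (q:ℚ) ^ 2) / (2 * (p:ℚ) * (q:ℚ)), -(((p:ℚ) ^ 2 + (q:ℚ) ^ 2) / (2 * (p:ℚ) * (q:ℚ))),
          1 / 2 + ((p:ℚ) ^ 2 + (p:ℚ) * (q:ℚ) - (q:ℚ) ^ 2) / (2 * (p:ℚ) * (q:ℚ)),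
          1 / 2 - ((p:ℚ) ^ 2 + (p:ℚ) * (q:ℚ) - (q:ℚ) ^ 2) / (2 * (p:ℚ) * (q:ℚ)),
          -(1 / 2) + ((p:ℚ) ^ 2 + (p:ℚ) * (q:ℚ) - (q:ℚ) ^ 2) / (2 * (p:ℚ) * (q:ℚ)),
          -(1 / 2) - ((p:ℚ) ^ 2 + (p:ℚ) * (q:ℚ) - (q:ℚ) ^ 2) / (2 * (p:ℚ) * (q:ℚ))} ∧
      {x : ℚ | IsPreper (C p q) x}.ncard = 6 ∧
      (∃ a b : ℚ, a ≠ b ∧ {x : ℚ | IsPer (C p q) x} = {a, b} ∧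
        fc (C p q) a = b ∧ fc (C p q) b = a) := by
  obtain ⟨hD, hS2, hS201, hT50a, hT50b, hN80, hSev, hTev, hDodd, hp599, hq601⟩ :=
    numf hp hq hpodd hqodd hne hclose
  have hP : ((p:ℚ)) ≠ 0 := Nat.cast_ne_zero.mpr hp.pos.ne'
  have hQ : ((q:ℚ)) ≠ 0 := Nat.cast_ne_zero.mpr hq.pos.ne'
  have hPz : (0:ℤ) < (p:ℤ) := by linarith
  have hQz : (0:ℤ) < (q:ℤ) := by linarith
  have hPQz : (p:ℤ) ≠ (q:ℤ) := fun h => hne (by exact_mod_cast h)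
  set c := C p q with hc
  set e : ℤ → ℚ := fun u => (u:ℚ)/(2*(p:ℚ)*(q:ℚ)) with he
  -- integer distinctness
  have hS2s : 2*Dz p q < Sz p q := by
    have h0 : (p:ℤ) - q ≠ 0 := sub_ne_zero.mpr hPQz
    have h1 : 0 < ((p:ℤ) - q)^2 := by positivity
    simp only [Sz, Dz] at *
    nlinarith
  have hT0 : Tz p q ≠ 0 := by
    simp only [Tz]
    intro h
    have h2 : ((p:ℤ) - q) * ((p:ℤ) + q) = 0 := by linarith
    rcases mul_eq_zero.mp h2 with h3 | h3
    · exact hPQz (by linarith)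
    · linarith
  have hSTD : Sz p q ≠ Tz p q + 2*Dz p q := by
    intro h
    have h2 : 2*(q:ℤ)*((q:ℤ) - p) = 0 := by simp only [Sz, Tz, Dz] at h; linarith
    rcases mul_eq_zero.mp h2 with h3 | h3
    · linarith
    · exact hPQz (by linarith)
  -- injectivity of e
  have hPpos : (0:ℚ) < (p:ℚ) := by exact_mod_cast hp.pos
  have hQpos : (0:ℚ) < (q:ℚ) := by exact_mod_cast hq.pos
  have h2PQ : (0:ℚ) < 2*(p:ℚ)*(q:ℚ) := by positivity
  have einj : ∀ u v : ℤ, e u = e v → u = v := by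
    intro u v h
    simp only [he] at h
    rw [div_eq_div_iff h2PQ.ne' h2PQ.ne'] at h
    have := mul_right_cancel₀ h2PQ.ne' h
    exact_mod_cast this
  have eneq : ∀ u v : ℤ, u ≠ v → e u ≠ e v := fun u v h h' => h (einj u v h')
  -- the distinctness facts we need  (u values: S, -S, T+2D, -T, T, -(T+2D))
  have ne12 : e (Sz p q) ≠ e (-Sz p q) := eneq _ _ (by omega)
  have ne13 : e (Sz p q) ≠ e (Tz p q + 2*Dz p q) := eneq _ _ hSTD
  have ne14 : e (Sz p q) ≠ e (-Tz p q) := eneq _ _ (by simp only [Sz, Tz, Dz] at *; nlinarith)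
  have ne15 : e (Sz p q) ≠ e (Tz p q) := eneq _ _ (by simp only [Sz, Tz, Dz] at *; nlinarith)
  have ne16 : e (Sz p q) ≠ e (-(Tz p q + 2*Dz p q)) := eneq _ _ (by simp only [Sz, Tz, Dz] at *; nlinarith)
  have ne23 : e (-Sz p q) ≠ e (Tz p q + 2*Dz p q) := eneq _ _ (by simp only [Sz, Tz, Dz] at *; nlinarith)
  have ne24 : e (-Sz p q) ≠ e (-Tz p q) := eneq _ _ (by simp only [Sz, Tz, Dz] at *; nlinarith)
  have ne25 : e (-Sz p q) ≠ e (Tz p q) := eneq _ _ (by simp only [Sz, Tz, Dz] at *; nlinarith)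
  have ne26 : e (-Sz p q) ≠ e (-(Tz p q + 2*Dz p q)) := eneq _ _ (fun h => hSTD (by omega))
  have ne34 : e (Tz p q + 2*Dz p q) ≠ e (-Tz p q) := eneq _ _ (by omega)
  have ne35 : e (Tz p q + 2*Dz p q) ≠ e (Tz p q) := eneq _ _ (by omega)
  have ne36 : e (Tz p q + 2*Dz p q) ≠ e (-(Tz p q + 2*Dz p q)) := eneq _ _ (by omega)
  have ne45 : e (-Tz p q) ≠ e (Tz p q) := eneq _ _ (by omega)
  have ne46 : e (-Tz p q) ≠ e (-(Tz p q + 2*Dz p q)) := eneq _ _ (by omega)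
  have ne56 : e (Tz p q) ≠ e (-(Tz p q + 2*Dz p q)) := eneq _ _ (by omega)

  -- f-values
  have fS : fc c (e (Sz p q)) = e (-Tz p q) :=
    fval hp hq (by simp only [Sz, Dz, Tz, Nz]; ring)
  have fmS : fc c (e (-Sz p q)) = e (-Tz p q) :=
    fval hp hq (by simp only [Sz, Dz, Tz, Nz]; ring)
  have fT : fc c (e (Tz p q)) = e (-(Tz p q + 2*Dz p q)) :=
    fval hp hq (by simp only [Sz, Dz, Tz, Nz]; ring)
  have fmT : fc c (e (-Tz p q)) = e (-(Tz p q + 2*Dz p q)) :=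
    fval hp hq (by simp only [Sz, Dz, Tz, Nz]; ring)
  have fT2 : fc c (e (Tz p q + 2*Dz p q)) = e (Tz p q) :=
    fval hp hq (by simp only [Sz, Dz, Tz, Nz]; ring)
  have fmT2 : fc c (e (-(Tz p q + 2*Dz p q))) = e (Tz p q) :=
    fval hp hq (by simp only [Sz, Dz, Tz, Nz]; ring)
  -- preperiodicity of the six points
  have hpre5 : IsPreper c (e (Tz p q)) := by
    refine ⟨0, 2, by norm_num, ?_⟩
    show e (Tz p q) = fc c (fc c (e (Tz p q)))
    rw [fT, fmT2]
  have hpre6 : IsPreper c (e (-(Tz p q + 2*Dz p q))) := by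
    refine ⟨0, 2, by norm_num, ?_⟩
    show e (-(Tz p q + 2*Dz p q)) = fc c (fc c (e (-(Tz p q + 2*Dz p q))))
    rw [fmT2, fT]
  have hpre4 : IsPreper c (e (-Tz p q)) := by
    refine ⟨1, 3, by norm_num, ?_⟩
    show fc c (e (-Tz p q)) = fc c (fc c (fc c (e (-Tz p q))))
    rw [fmT, fmT2, fT]
  have hpre3 : IsPreper c (e (Tz p q + 2*Dz p q)) := by
    refine ⟨1, 3, by norm_num, ?_⟩
    show fc c (e (Tz p q + 2*Dz p q)) = fc c (fc c (fc c (e (Tz p q + 2*Dz p q))))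
    rw [fT2, fT, fmT2]
  have hpre1 : IsPreper c (e (Sz p q)) := by
    refine ⟨2, 4, by norm_num, ?_⟩
    show fc c (fc c (e (Sz p q))) = fc c (fc c (fc c (fc c (e (Sz p q)))))
    rw [fS, fmT, fmT2, fT]
  have hpre2 : IsPreper c (e (-Sz p q)) := by
    refine ⟨2, 4, by norm_num, ?_⟩
    show fc c (fc c (e (-Sz p q))) = fc c (fc c (fc c (fc c (e (-Sz p q)))))
    rw [fmS, fmT, fmT2, fT]
  -- identification of statement elements with e-values
  have hA1 : ((p:ℚ) ^ 2 + (q:ℚ) ^ 2) / (2 * (p:ℚ) * (q:ℚ)) = e (Sz p q) := by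
    simp only [he, Sz]; push_cast; ring
  have hA2 : -(((p:ℚ) ^ 2 + (q:ℚ) ^ 2) / (2 * (p:ℚ) * (q:ℚ))) = e (-Sz p q) := by
    simp only [he, Sz]; push_cast; ring
  have hA3 : 1 / 2 + ((p:ℚ) ^ 2 + (p:ℚ) * (q:ℚ) - (q:ℚ) ^ 2) / (2 * (p:ℚ) * (q:ℚ))
      = e (Tz p q + 2*Dz p q) := by
    simp only [he, Tz, Dz]; push_cast; field_simp; ring
  have hA4 : 1 / 2 - ((p:ℚ) ^ 2 + (p:ℚ) * (q:ℚ) - (q:ℚ) ^ 2) / (2 * (p:ℚ) * (q:ℚ))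
      = e (-Tz p q) := by
    simp only [he, Tz]; push_cast; field_simp; ring
  have hA5 : -(1 / 2) + ((p:ℚ) ^ 2 + (p:ℚ) * (q:ℚ) - (q:ℚ) ^ 2) / (2 * (p:ℚ) * (q:ℚ))
      = e (Tz p q) := by
    simp only [he, Tz]; push_cast; field_simp; ring
  have hA6 : -(1 / 2) - ((p:ℚ) ^ 2 + (p:ℚ) * (q:ℚ) - (q:ℚ) ^ 2) / (2 * (p:ℚ) * (q:ℚ))
      = e (-(Tz p q + 2*Dz p q)) := by
    simp only [he, Tz, Dz]; push_cast; field_simp; ring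
  rw [hA2, hA1, hA3, hA4, hA5, hA6]
  -- the set equality
  have hset : {x : ℚ | IsPreper c x} =
      {e (Sz p q), e (-Sz p q), e (Tz p q + 2*Dz p q), e (-Tz p q), e (Tz p q),
        e (-(Tz p q + 2*Dz p q))} := by
    ext x
    simp only [Set.mem_setOf_eq, Set.mem_insert_iff, Set.mem_singleton_iff]
    constructor
    · intro hx
      obtain ⟨u, hxu, hcase⟩ := classify hp hq hpodd hqodd hne hclose hx
      have hxe : x = e u := hxu
      rcases hcase with rfl | rfl | rfl | rfl | rfl | rfl
      · exact Or.inl hxe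
      · exact Or.inr (Or.inl hxe)
      · exact Or.inr (Or.inr (Or.inr (Or.inr (Or.inl hxe))))
      · exact Or.inr (Or.inr (Or.inr (Or.inl hxe)))
      · exact Or.inr (Or.inr (Or.inl hxe))
      · exact Or.inr (Or.inr (Or.inr (Or.inr (Or.inr hxe))))
    · intro hx
      rcases hx with rfl | rfl | rfl | rfl | rfl | rfl
      · exact hpre1
      · exact hpre2
      · exact hpre3
      · exact hpre4
      · exact hpre5
      · exact hpre6
  refine ⟨hset, ?_, ?_⟩
  · -- ncard
    rw [hset]
    have m1 : e (Sz p q) ∉ ({e (-Sz p q), e (Tz p q + 2*Dz p q), e (-Tz p q), e (Tz p q),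
        e (-(Tz p q + 2*Dz p q))} : Set ℚ) := by
      simp only [Set.mem_insert_iff, Set.mem_singleton_iff]
      push_neg
      exact ⟨ne12, ne13, ne14, ne15, ne16⟩
    have m2 : e (-Sz p q) ∉ ({e (Tz p q + 2*Dz p q), e (-Tz p q), e (Tz p q),
        e (-(Tz p q + 2*Dz p q))} : Set ℚ) := by
      simp only [Set.mem_insert_iff, Set.mem_singleton_iff]
      push_neg
      exact ⟨ne23, ne24, ne25, ne26⟩
    have m3 : e (Tz p q + 2*Dz p q) ∉ ({e (-Tz p q), e (Tz p q),
        e (-(Tz p q + 2*Dz p q))} : Set ℚ) := by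
      simp only [Set.mem_insert_iff, Set.mem_singleton_iff]
      push_neg
      exact ⟨ne34, ne35, ne36⟩
    have m4 : e (-Tz p q) ∉ ({e (Tz p q), e (-(Tz p q + 2*Dz p q))} : Set ℚ) := by
      simp only [Set.mem_insert_iff, Set.mem_singleton_iff]
      push_neg
      exact ⟨ne45, ne46⟩
    have m5 : e (Tz p q) ∉ ({e (-(Tz p q + 2*Dz p q))} : Set ℚ) := by
      simp only [Set.mem_singleton_iff]
      exact ne56
    rw [Set.ncard_insert_of_notMem m1 (Set.toFinite _),
        Set.ncard_insert_of_notMem m2 (Set.toFinite _),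
        Set.ncard_insert_of_notMem m3 (Set.toFinite _),
        Set.ncard_insert_of_notMem m4 (Set.toFinite _),
        Set.ncard_insert_of_notMem m5 (Set.toFinite _),
        Set.ncard_singleton]
  · -- periodic points
    refine ⟨e (Tz p q), e (-(Tz p q + 2*Dz p q)), ne56, ?_, fT, fmT2⟩
    ext x
    simp only [Set.mem_setOf_eq, Set.mem_insert_iff, Set.mem_singleton_iff]
    constructor
    · rintro ⟨n, hn1, hfix⟩
      have hxpre : IsPreper c x := ⟨0, n, by omega, by simpa using hfix.symm⟩
      have hx6 := (hset ▸ hxpre : x ∈ ({e (Sz p q), e (-Sz p q), e (Tz p q + 2*Dz p q),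
        e (-Tz p q), e (Tz p q), e (-(Tz p q + 2*Dz p q))} : Set ℚ))
      simp only [Set.mem_insert_iff, Set.mem_singleton_iff] at hx6
      -- invariant pair facts
      have hstay : ∀ y, (y = e (Tz p q) ∨ y = e (-(Tz p q + 2*Dz p q))) →
          (fc c y = e (Tz p q) ∨ fc c y = e (-(Tz p q + 2*Dz p q))) := by
        rintro y (rfl | rfl)
        · rw [fT]; exact Or.inr rfl
        · rw [fmT2]; exact Or.inl rfl
      have horb : ∀ k : ℕ, ∀ y, (y = e (Tz p q) ∨ y = e (-(Tz p q + 2*Dz p q))) →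
          ((fc c)^[k] y = e (Tz p q) ∨ (fc c)^[k] y = e (-(Tz p q + 2*Dz p q))) := by
        intro k
        induction k with
        | zero => intro y hy; simpa using hy
        | succ k ih =>
          intro y hy
          rw [Function.iterate_succ_apply]
          exact ih _ (hstay y hy)
      rcases hx6 with rfl | rfl | rfl | rfl | rfl | rfl
      · -- x = e S : impossible
        exfalso
        obtain ⟨m, rfl⟩ : ∃ m, n = m + 1 := ⟨n - 1, by omega⟩
        rw [Function.iterate_succ_apply, fS] at hfix
        rcases Nat.eq_zero_or_pos m with rfl | hm
        · simp only [Function.iterate_zero_apply] at hfix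
          exact ne14 hfix.symm
        · obtain ⟨m', rfl⟩ : ∃ m', m = m' + 1 := ⟨m - 1, by omega⟩
          rw [Function.iterate_succ_apply, fmT] at hfix
          rcases horb m' _ (Or.inr rfl) with h | h
          · exact ne15 (hfix.symm.trans h)
          · exact ne16 (hfix.symm.trans h)
      · exfalso
        obtain ⟨m, rfl⟩ : ∃ m, n = m + 1 := ⟨n - 1, by omega⟩
        rw [Function.iterate_succ_apply, fmS] at hfix
        rcases Nat.eq_zero_or_pos m with rfl | hm
        · simp only [Function.iterate_zero_apply] at hfix
          exact ne24 hfix.symm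
        · obtain ⟨m', rfl⟩ : ∃ m', m = m' + 1 := ⟨m - 1, by omega⟩
          rw [Function.iterate_succ_apply, fmT] at hfix
          rcases horb m' _ (Or.inr rfl) with h | h
          · exact ne25 (hfix.symm.trans h)
          · exact ne26 (hfix.symm.trans h)
      · exfalso
        obtain ⟨m, rfl⟩ : ∃ m, n = m + 1 := ⟨n - 1, by omega⟩
        rw [Function.iterate_succ_apply, fT2] at hfix
        rcases horb m _ (Or.inl rfl) with h | h
        · exact ne35 (hfix.symm.trans h)
        · exact ne36 (hfix.symm.trans h)
      · exfalso
        obtain ⟨m, rfl⟩ : ∃ m, n = m + 1 := ⟨n - 1, by omega⟩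
        rw [Function.iterate_succ_apply, fmT] at hfix
        rcases horb m _ (Or.inr rfl) with h | h
        · exact ne45 (hfix.symm.trans h)
        · exact ne46 (hfix.symm.trans h)
      · exact Or.inl rfl
      · exact Or.inr rfl
    · rintro (rfl | rfl)
      · exact ⟨2, by norm_num, by show fc c (fc c (e (Tz p q))) = _; rw [fT, fmT2]⟩
      · exact ⟨2, by norm_num, by
          show fc c (fc c (e (-(Tz p q + 2*Dz p q)))) = _; rw [fmT2, fT]⟩

end key

/-- For sequences of distinct odd primes `p n ≠ q n` with `p n / q n → 1`, and
`c n = -(p⁴ + 2p³q + 2p²q² - 2pq³ + q⁴)/(2pq)²`, for all large `n` the map `f_{c n}`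
has exactly the six rational preperiodic points `±(p² + q²)/(2pq)` and
`±1/2 ± (p² + pq - q²)/(2pq)`, of which exactly 2 are periodic, forming a 2-cycle. -/
theorem graph_6_2_family (p q : ℕ → ℕ)
    (hp : ∀ n, (p n).Prime) (hq : ∀ n, (q n).Prime)
    (hpodd : ∀ n, Odd (p n)) (hqodd : ∀ n, Odd (q n))
    (hne : ∀ n, p n ≠ q n)
    (hlim : Tendsto (fun n => (p n : ℝ) / (q n : ℝ)) atTop (nhds 1)) :
    ∀ᶠ n in atTop,
      letI P : ℚ := (p n : ℚ)
      letI Q : ℚ := (q n : ℚ)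
      letI c : ℚ := -((P ^ 4 + 2 * P ^ 3 * Q + 2 * P ^ 2 * Q ^ 2 - 2 * P * Q ^ 3 + Q ^ 4) /
        (2 * P * Q) ^ 2)
      {x : ℚ | IsPreper c x} =
        {(P ^ 2 + Q ^ 2) / (2 * P * Q), -((P ^ 2 + Q ^ 2) / (2 * P * Q)),
          1 / 2 + (P ^ 2 + P * Q - Q ^ 2) / (2 * P * Q),
          1 / 2 - (P ^ 2 + P * Q - Q ^ 2) / (2 * P * Q),
          -(1 / 2) + (P ^ 2 + P * Q - Q ^ 2) / (2 * P * Q),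
          -(1 / 2) - (P ^ 2 + P * Q - Q ^ 2) / (2 * P * Q)} ∧
      {x : ℚ | IsPreper c x}.ncard = 6 ∧
      (∃ a b : ℚ, a ≠ b ∧ {x : ℚ | IsPer c x} = {a, b} ∧ fc c a = b ∧ fc c b = a) := by
  have h1 : ∀ᶠ n in atTop, dist ((p n : ℝ) / (q n : ℝ)) 1 < 1/300 :=
    Metric.tendsto_nhds.mp hlim (1/300) (by norm_num)
  filter_upwards [h1] with n hn
  have hQ0 : (0:ℝ) < (q n : ℝ) := by exact_mod_cast (hq n).pos
  rw [Real.dist_eq] at hn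
  have h2 : (p n : ℝ)/(q n : ℝ) - 1 = ((p n : ℝ) - (q n : ℝ))/(q n : ℝ) := by
    field_simp
  rw [h2, abs_div, abs_of_pos hQ0, div_lt_iff₀ hQ0] at hn
  have h3 : ((300 * ((p n :ℤ) - (q n :ℤ)).natAbs : ℕ) : ℝ) < ((q n : ℕ) : ℝ) := by
    push_cast [Nat.cast_natAbs]
    push_cast
    nlinarith [hn]
  have hclose : 300 * ((p n :ℤ) - (q n :ℤ)).natAbs < q n := by exact_mod_cast h3
  exact key (hp n) (hq n) (hpodd n) (hqodd n) (hne n) hclose
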